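/- If n, k, m ∈ ℤ³ each have nonzero third coordinate and there exist signs σ₁, σ₂ ∈ {±1} with σ₁·k₃/|k| + σ₂·m₃/|m| = n₃/|n|, and we write |n| = ν√d_n, |k| = κ√d_k, |m| = μ√d_m with ν, κ, μ positive integers and d_n, d_k, d_m squarefree positive integers, then d_n = d_k = d_m. -/

import Mathlib

/-- Euclidean norm of an integer vector in ℤ³. -/
noncomputable def nrm (v : Fin 3 → ℤ) : ℝ :=
  Real.sqrt (((v 0 : ℝ)) ^ 2 + ((v 1 : ℝ)) ^ 2 + ((v 2 : ℝ)) ^ 2)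

lemma squarefree_eq_of_isSquare_mul {a b : ℕ} (ha : Squarefree a) (hb : Squarefree b)
    (h : IsSquare (a * b)) : a = b := by
  obtain ⟨r, hr⟩ := h
  have hab : a ∣ r ^ 2 := by rw [sq, ← hr]; exact Dvd.intro b rfl
  have har : a ∣ r := (ha.dvd_pow_iff_dvd two_ne_zero).mp hab
  obtain ⟨s, hs⟩ := har
  have ha0 : a ≠ 0 := ha.ne_zero
  have hb' : b = a * (s * s) := by
    have : a * b = a * (a * (s * s)) := by rw [hr, hs]; ring
    exact Nat.eq_of_mul_eq_mul_left (Nat.pos_of_ne_zero ha0) this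
  have hsu : IsUnit s := hb s (by rw [hb']; exact Dvd.intro_left a rfl)
  have : s = 1 := Nat.isUnit_iff.mp hsu
  rw [hb', this]; ring

lemma sqf_eq_of_rat_sqrt_mul {a b : ℕ} (ha : Squarefree a) (hb : Squarefree b)
    (q : ℚ) (h : (q : ℝ) = Real.sqrt a * Real.sqrt b) : a = b := by
  apply squarefree_eq_of_isSquare_mul ha hb
  by_contra hns
  have : Irrational (Real.sqrt ((a * b : ℕ) : ℝ)) := irrational_sqrt_natCast_iff.mpr hns
  rw [Nat.cast_mul, Real.sqrt_mul (Nat.cast_nonneg a), ← h] at this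
  exact this.ne_rat q rfl

lemma main_lemma {dn dk dm : ℕ} (hdn0 : 0 < dn) (hdk0 : 0 < dk) (hdm0 : 0 < dm)
    (hdn : Squarefree dn) (hdk : Squarefree dk) (hdm : Squarefree dm)
    (a b c : ℚ) (ha : a ≠ 0) (hb : b ≠ 0) (hc : c ≠ 0)
    (heq : (a : ℝ) * Real.sqrt dk + (b : ℝ) * Real.sqrt dm = (c : ℝ) * Real.sqrt dn) :
    dn = dk ∧ dk = dm := by
  set x := Real.sqrt dk with hxdef
  set y := Real.sqrt dm with hydef
  set z := Real.sqrt dn with hzdef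
  have hx2 : x * x = dk := Real.mul_self_sqrt (Nat.cast_nonneg _)
  have hy2 : y * y = dm := Real.mul_self_sqrt (Nat.cast_nonneg _)
  have hz2 : z * z = dn := Real.mul_self_sqrt (Nat.cast_nonneg _)
  have hxpos : 0 < x := Real.sqrt_pos.mpr (by exact_mod_cast hdk0)
  have hzpos : 0 < z := Real.sqrt_pos.mpr (by exact_mod_cast hdn0)
  have ha' : (a : ℝ) ≠ 0 := by exact_mod_cast ha
  have hb' : (b : ℝ) ≠ 0 := by exact_mod_cast hb
  have hc' : (c : ℝ) ≠ 0 := by exact_mod_cast hc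
  have hsq : (a:ℝ)^2 * dk + 2*a*b*(x*y) + (b:ℝ)^2 * dm = (c:ℝ)^2 * dn := by
    have h1 : ((a : ℝ) * x + (b : ℝ) * y) ^ 2 = ((c : ℝ) * z) ^ 2 := by rw [heq]
    nlinarith [h1, hx2, hy2, hz2]
  have hxy : ((((c^2 * dn - a^2 * dk - b^2 * dm) / (2*a*b)) : ℚ) : ℝ) = x * y := by
    push_cast
    field_simp
    nlinarith [hsq]
  have hkm : dk = dm := sqf_eq_of_rat_sqrt_mul hdk hdm _ hxy
  subst hkm
  have hxy' : y = x := by rw [hydef, hxdef]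
  rw [hxy'] at heq
  have heq2 : ((a : ℝ) + b) * x = (c : ℝ) * z := by rw [← heq]; ring
  have habne : (a : ℝ) + b ≠ 0 := by
    intro h0
    rw [h0, zero_mul] at heq2
    exact (mul_ne_zero hc' (ne_of_gt hzpos)) heq2.symm
  have hzx : ((((a + b) / c * dk : ℚ)) : ℝ) = z * x := by
    push_cast
    have : z = ((a : ℝ) + b) / c * x := by field_simp; linarith [heq2]
    rw [this, mul_assoc, hx2]
  have hnk : dn = dk := sqf_eq_of_rat_sqrt_mul hdn hdk _ hzx
  exact ⟨hnk, rfl⟩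

/-- If n, k, m ∈ ℤ³ have nonzero third coordinates and satisfy the resonance relation
σ₁·k₃/|k| + σ₂·m₃/|m| = n₃/|n| for some signs σ₁, σ₂ ∈ {±1}, and the norms are written
as |n| = ν√dₙ, |k| = κ√d_k, |m| = μ√d_m with positive integers ν, κ, μ and squarefree
positive integers dₙ, d_k, d_m, then dₙ = d_k = d_m. -/
theorem squarefree_parts_equal (n k m : Fin 3 → ℤ)
    (hn3 : n 2 ≠ 0) (hk3 : k 2 ≠ 0) (hm3 : m 2 ≠ 0)
    (ν κ μ : ℕ) (dn dk dm : ℕ)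
    (hν : 0 < ν) (hκ : 0 < κ) (hμ : 0 < μ)
    (hdn0 : 0 < dn) (hdk0 : 0 < dk) (hdm0 : 0 < dm)
    (hdn : Squarefree dn) (hdk : Squarefree dk) (hdm : Squarefree dm)
    (hn : nrm n = (ν : ℝ) * Real.sqrt dn)
    (hk : nrm k = (κ : ℝ) * Real.sqrt dk)
    (hm : nrm m = (μ : ℝ) * Real.sqrt dm)
    (hres : ∃ σ₁ σ₂ : ℝ, (σ₁ = 1 ∨ σ₁ = -1) ∧ (σ₂ = 1 ∨ σ₂ = -1) ∧
      σ₁ * (k 2 : ℝ) / nrm k + σ₂ * (m 2 : ℝ) / nrm m = (n 2 : ℝ) / nrm n) :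
    dn = dk ∧ dk = dm := by
  obtain ⟨σ₁, σ₂, h1, h2, heq⟩ := hres
  obtain ⟨ε₁, hε₁, hε₁0⟩ : ∃ e : ℚ, (e : ℝ) = σ₁ ∧ e ≠ 0 := by
    rcases h1 with h | h
    · exact ⟨1, by rw [h]; norm_num, one_ne_zero⟩
    · exact ⟨-1, by rw [h]; norm_num, by norm_num⟩
  obtain ⟨ε₂, hε₂, hε₂0⟩ : ∃ e : ℚ, (e : ℝ) = σ₂ ∧ e ≠ 0 := by
    rcases h2 with h | h
    · exact ⟨1, by rw [h]; norm_num, one_ne_zero⟩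
    · exact ⟨-1, by rw [h]; norm_num, by norm_num⟩
  rw [hn, hk, hm] at heq
  set x := Real.sqrt dk with hxdef
  set y := Real.sqrt dm with hydef
  set z := Real.sqrt dn with hzdef
  have hx2 : x * x = dk := Real.mul_self_sqrt (Nat.cast_nonneg _)
  have hy2 : y * y = dm := Real.mul_self_sqrt (Nat.cast_nonneg _)
  have hz2 : z * z = dn := Real.mul_self_sqrt (Nat.cast_nonneg _)
  have hxpos : 0 < x := Real.sqrt_pos.mpr (by exact_mod_cast hdk0)
  have hypos : 0 < y := Real.sqrt_pos.mpr (by exact_mod_cast hdm0)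
  have hzpos : 0 < z := Real.sqrt_pos.mpr (by exact_mod_cast hdn0)
  have hκ' : (κ : ℝ) ≠ 0 := Nat.cast_ne_zero.mpr hκ.ne'
  have hμ' : (μ : ℝ) ≠ 0 := Nat.cast_ne_zero.mpr hμ.ne'
  have hν' : (ν : ℝ) ≠ 0 := Nat.cast_ne_zero.mpr hν.ne'
  set a : ℚ := ε₁ * (k 2 : ℚ) / (κ * dk) with hadef
  set b : ℚ := ε₂ * (m 2 : ℚ) / (μ * dm) with hbdef
  set c : ℚ := (n 2 : ℚ) / (ν * dn) with hcdef
  have ha : a ≠ 0 := by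
    rw [hadef]
    apply div_ne_zero (mul_ne_zero hε₁0 (Int.cast_ne_zero.mpr hk3))
    positivity
  have hb : b ≠ 0 := by
    rw [hbdef]
    apply div_ne_zero (mul_ne_zero hε₂0 (Int.cast_ne_zero.mpr hm3))
    positivity
  have hc : c ≠ 0 := by
    rw [hcdef]
    apply div_ne_zero (Int.cast_ne_zero.mpr hn3)
    positivity
  have heq' : (a : ℝ) * x + (b : ℝ) * y = (c : ℝ) * z := by
    have t1 : (a : ℝ) * x = σ₁ * (k 2 : ℝ) / ((κ : ℝ) * x) := by
      rw [hadef, ← hε₁]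
      push_cast
      field_simp
      linear_combination hx2
    have t2 : (b : ℝ) * y = σ₂ * (m 2 : ℝ) / ((μ : ℝ) * y) := by
      rw [hbdef, ← hε₂]
      push_cast
      field_simp
      linear_combination hy2
    have t3 : (c : ℝ) * z = (n 2 : ℝ) / ((ν : ℝ) * z) := by
      rw [hcdef]
      push_cast
      field_simp
      linear_combination hz2
    rw [t1, t2, t3]
    exact heq
  exact main_lemma hdn0 hdk0 hdm0 hdn hdk hdm a b c ha hb hc heq'
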